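/- For every real s > 2 and positive integer t, there exists ε = ε(s,t) > 0 such that for all sufficiently large n there is a graph G on n vertices with average degree at least n^{1−2/s+ε} in which every nonempty induced subgraph on at most t vertices has average degree less than s. -/

import Mathlib

open Finset

namespace Stmt7Aux

noncomputable def mm (s : ℝ) (r : ℕ) : ℕ := ⌈s * r / 2⌉₊

def KK (n : ℕ) : Finset (Sym2 (Fin n)) := Finset.univ.filter (fun e => ¬ e.IsDiag)

abbrev Om (n b : ℕ) := Sym2 (Fin n) → Fin b

def present (n b : ℕ) (ω : Om n b) : Finset (Sym2 (Fin n)) :=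
  (KK n).filter (fun e => (ω e).val = 0)

noncomputable def TT (n t : ℕ) (s : ℝ) : Finset (Finset (Fin n) × Finset (Sym2 (Fin n))) :=
  (Finset.univ.powerset ×ˢ (KK n).powerset).filter
    (fun p => p.1.Nonempty ∧ p.1.card ≤ t ∧ p.2.card = mm s p.1.card ∧
      ∀ e ∈ p.2, ∀ v ∈ e, v ∈ p.1)

noncomputable def Bad (n b t : ℕ) (s : ℝ) (ω : Om n b) :=
  (TT n t s).filter (fun p => ∀ e ∈ p.2, (ω e).val = 0)

lemma KK_card (n : ℕ) : (KK n).card = n.choose 2 := by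
  have := Sym2.card_subtype_not_diag (α := Fin n)
  rw [Fintype.card_subtype] at this
  simpa [KK] using this


lemma card_superset (n b : ℕ) (hb : 0 < b) (F : Finset (Sym2 (Fin n))) :
    ((Finset.univ : Finset (Om n b)).filter (fun ω => ∀ e ∈ F, (ω e).val = 0)).card
      = b ^ (Fintype.card (Sym2 (Fin n)) - F.card) := by
  classical
  have hz : (Finset.univ.filter (fun x : Fin b => x.val = 0)) = {(⟨0, hb⟩ : Fin b)} := by
    ext x; simp [Fin.ext_iff]
  have key : (Finset.univ : Finset (Om n b)).filter (fun ω => ∀ e ∈ F, (ω e).val = 0)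
      = Fintype.piFinset (fun e => if e ∈ F then Finset.univ.filter (fun x : Fin b => x.val = 0)
          else Finset.univ) := by
    ext ω
    simp only [Finset.mem_filter, Finset.mem_univ, true_and, Fintype.mem_piFinset]
    constructor
    · intro h e
      by_cases he : e ∈ F <;> simp [he, h e]
    · intro h e he
      have := h e
      simpa [he] using this
  rw [key, Fintype.card_piFinset]
  have : ∀ e : Sym2 (Fin n),
      ((if e ∈ F then Finset.univ.filter (fun x : Fin b => x.val = 0) else Finset.univ).card)
      = if e ∈ F then 1 else b := by
    intro e; by_cases he : e ∈ F <;> simp [he, hz]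
  simp only [this]
  rw [Finset.prod_ite (f := fun _ => 1) (g := fun _ => b), Finset.prod_const, Finset.prod_const,
    one_pow, one_mul]
  congr 1
  rw [Finset.filter_not, Finset.card_sdiff_of_subset (Finset.filter_subset _ _),
    Finset.filter_mem_eq_inter, Finset.univ_inter, Finset.card_univ]

lemma sum_X (n b : ℕ) (hb : 0 < b) :
    ∑ ω : Om n b, (present n b ω).card
      = (KK n).card * b ^ (Fintype.card (Sym2 (Fin n)) - 1) := by
  classical
  have h1 : ∀ ω : Om n b, (present n b ω).card
      = ∑ e ∈ KK n, if (ω e).val = 0 then 1 else 0 := fun ω => Finset.card_filter _ _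
  simp only [h1]
  rw [Finset.sum_comm]
  have h2 : ∀ e ∈ KK n, (∑ ω : Om n b, if (ω e).val = 0 then 1 else 0)
      = b ^ (Fintype.card (Sym2 (Fin n)) - 1) := by
    intro e _
    have hcs := card_superset n b hb {e}
    simp only [Finset.card_singleton] at hcs
    rw [← hcs, Finset.card_filter]
    exact Finset.sum_congr rfl (fun ω _ => by simp)
  rw [Finset.sum_congr rfl h2, Finset.sum_const, smul_eq_mul]

lemma sum_Y (n b t : ℕ) (s : ℝ) (hb : 0 < b) :
    ∑ ω : Om n b, (Bad n b t s ω).card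
      = ∑ p ∈ TT n t s, b ^ (Fintype.card (Sym2 (Fin n)) - mm s p.1.card) := by
  classical
  have h1 : ∀ ω : Om n b, (Bad n b t s ω).card
      = ∑ p ∈ TT n t s, if (∀ e ∈ p.2, (ω e).val = 0) then 1 else 0 :=
    fun ω => Finset.card_filter _ _
  simp only [h1]
  rw [Finset.sum_comm]
  refine Finset.sum_congr rfl (fun p hp => ?_)
  have hcard : p.2.card = mm s p.1.card := by
    simp only [TT, Finset.mem_filter] at hp
    exact hp.2.2.2.1
  rw [← hcard, ← card_superset n b hb p.2, Finset.card_filter]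

lemma slots_card (n : ℕ) (R : Finset (Fin n)) :
    ((KK n).filter (fun e => ∀ v ∈ e, v ∈ R)).card ≤ R.card * R.card := by
  classical
  have := Finset.card_le_card_of_injOn (f := fun e : Sym2 (Fin n) => Quot.out e)
    (s := (KK n).filter (fun e => ∀ v ∈ e, v ∈ R)) (t := R ×ˢ R) ?_ ?_
  · simpa [Finset.card_product] using this
  · intro e he
    rw [Finset.mem_coe, Finset.mem_filter] at he
    exact Finset.mem_product.2 ⟨he.2 _ (Sym2.out_fst_mem e), he.2 _ (Sym2.out_snd_mem e)⟩
  · intro e1 _ e2 _ h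
    have h1 := Quot.out_eq e1
    have h2 := Quot.out_eq e2
    rw [← h1, ← h2]; exact congrArg _ h

lemma fiber_bound (n t r : ℕ) (s : ℝ) (hr : r ≤ t) :
    ((TT n t s).filter (fun p => p.1.card = r)).card ≤ 2 ^ (t * t) * n ^ r := by
  classical
  set Tr := (TT n t s).filter (fun p => p.1.card = r) with hTr
  have h1 : Tr.card ≤ 2 ^ (t * t) * (Tr.image Prod.fst).card := by
    apply Finset.card_le_mul_card_image
    intro R hR
    have hsub : (Tr.filter (fun p => p.1 = R)).card
        ≤ (((KK n).filter (fun e => ∀ v ∈ e, v ∈ R)).powerset).card := by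
      apply Finset.card_le_card_of_injOn (f := Prod.snd)
      · intro p hp
        simp only [hTr, TT, Finset.mem_coe, Finset.mem_filter, Finset.mem_product] at hp
        rw [Finset.mem_coe, Finset.mem_powerset]
        intro e he
        rw [Finset.mem_filter]
        obtain ⟨⟨⟨⟨hpa, hpb⟩, hne, hle, hc, hin⟩, hcr⟩, hfst⟩ := hp
        exact ⟨Finset.mem_powerset.1 hpb he, by rw [← hfst]; exact hin e he⟩
      · intro p hp q hq hpq
        have hp1 : p.1 = R := (Finset.mem_filter.1 hp).2
        have hq1 : q.1 = R := (Finset.mem_filter.1 hq).2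
        exact Prod.ext (hp1.trans hq1.symm) hpq
    rw [Finset.card_powerset] at hsub
    refine hsub.trans (Nat.pow_le_pow_right (by norm_num) ?_)
    -- |slots R| ≤ t * t
    have hRcard : R.card ≤ t := by
      rw [Finset.mem_image] at hR
      obtain ⟨p, hp, rfl⟩ := hR
      simp only [hTr, TT, Finset.mem_filter] at hp
      exact hp.1.2.2.1
    exact (slots_card n R).trans (Nat.mul_le_mul hRcard hRcard)
  refine h1.trans (Nat.mul_le_mul_left _ ?_)
  have h2 : Tr.image Prod.fst ⊆ Finset.univ.powersetCard r := by
    intro R hR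
    rw [Finset.mem_image] at hR
    obtain ⟨p, hp, rfl⟩ := hR
    rw [Finset.mem_powersetCard_univ]
    exact (Finset.mem_filter.1 hp).2
  refine (Finset.card_le_card h2).trans ?_
  rw [Finset.card_powersetCard, Finset.card_univ, Fintype.card_fin]
  exact Nat.choose_le_pow n r

open Real
lemma sum_T_real_bound (n b t : ℕ) (s β : ℝ) (hb : 0 < b) (hn : 1 ≤ n)
    (hbn : (n:ℝ) ^ β ≤ (b:ℝ))
    (hβ : ∀ r : ℕ, 1 ≤ r → r ≤ t → (r:ℝ) - 1/2 ≤ β * (mm s r)) :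
    ∑ p ∈ TT n t s, ((b:ℝ) ^ (Fintype.card (Sym2 (Fin n)) - mm s p.1.card))
      ≤ (t : ℝ) * 2 ^ (t*t) * (n:ℝ) ^ ((1:ℝ)/2)
          * (b:ℝ) ^ (Fintype.card (Sym2 (Fin n))) := by
  classical
  set c := Fintype.card (Sym2 (Fin n)) with hc
  have hn1 : (1:ℝ) ≤ (n:ℝ) := by exact_mod_cast hn
  have hnpos : (0:ℝ) < (n:ℝ) := by positivity
  have hb0 : (0:ℝ) < (b:ℝ) := by exact_mod_cast hb
  set W : ℝ := 2 ^ (t*t) * (n:ℝ) ^ ((1:ℝ)/2) * (b:ℝ) ^ c with hW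
  have hW0 : 0 ≤ W := by positivity
  have hmaps : ∀ p ∈ TT n t s, p.1.card ∈ Finset.range (t+1) := by
    intro p hp
    simp only [TT, Finset.mem_filter] at hp
    exact Finset.mem_range.2 (Nat.lt_succ_of_le hp.2.2.1)
  rw [← Finset.sum_fiberwise_of_maps_to hmaps]
  -- bound each fiber
  have hterm : ∀ j : ℕ, 1 ≤ j → j ≤ t →
      (∑ p ∈ (TT n t s).filter (fun p => p.1.card = j),
        (b:ℝ) ^ (c - mm s p.1.card)) ≤ W := by
    intro j hj1 hj2
    have hcongr : (∑ p ∈ (TT n t s).filter (fun p => p.1.card = j),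
        (b:ℝ) ^ (c - mm s p.1.card))
        = ((TT n t s).filter (fun p => p.1.card = j)).card * (b:ℝ) ^ (c - mm s j) := by
      rw [Finset.sum_congr rfl (fun p hp => by
        rw [(Finset.mem_filter.1 hp).2]), Finset.sum_const, nsmul_eq_mul]
    rw [hcongr]
    rcases Finset.eq_empty_or_nonempty ((TT n t s).filter (fun p => p.1.card = j)) with he | ⟨p, hp⟩
    · rw [he]; simpa using hW0
    · -- mm s j ≤ c
      have hmc : mm s j ≤ c := by
        simp only [TT, Finset.mem_filter] at hp
        have h1 : p.2.card = mm s j := by rw [hp.1.2.2.2.1, hp.2]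
        calc mm s j = p.2.card := h1.symm
          _ ≤ (KK n).card := Finset.card_le_card (Finset.mem_powerset.1 (Finset.mem_product.1 hp.1.1).2)
          _ ≤ c := Finset.card_le_univ _
      have hkey : (n:ℝ) ^ ((j:ℝ) - 1/2) ≤ (b:ℝ) ^ (mm s j) := by
        calc (n:ℝ) ^ ((j:ℝ) - 1/2) ≤ (n:ℝ) ^ (β * (mm s j : ℕ)) :=
              Real.rpow_le_rpow_of_exponent_le hn1 (hβ j hj1 hj2)
          _ = ((n:ℝ) ^ β) ^ (mm s j : ℕ) := by
              rw [← Real.rpow_natCast ((n:ℝ)^β) (mm s j), ← Real.rpow_mul (le_of_lt hnpos)]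
          _ ≤ (b:ℝ) ^ (mm s j) := by
              exact pow_le_pow_left₀ (Real.rpow_nonneg (le_of_lt hnpos) _) hbn _
      have hsplit : (b:ℝ) ^ (c - mm s j) = (b:ℝ)^c / (b:ℝ)^(mm s j) :=
        pow_sub₀ _ (ne_of_gt hb0) hmc
      have hfc : (((TT n t s).filter (fun p => p.1.card = j)).card : ℝ)
          ≤ 2 ^ (t*t) * (n:ℝ) ^ (j:ℝ) := by
        have := fiber_bound n t j s hj2
        calc (((TT n t s).filter (fun p => p.1.card = j)).card : ℝ)
            ≤ ((2 ^ (t*t) * n ^ j : ℕ) : ℝ) := by exact_mod_cast this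
          _ = 2 ^ (t*t) * (n:ℝ) ^ (j:ℝ) := by
              push_cast
              rw [Real.rpow_natCast]
      calc (((TT n t s).filter (fun p => p.1.card = j)).card : ℝ) * (b:ℝ) ^ (c - mm s j)
          ≤ (2 ^ (t*t) * (n:ℝ) ^ (j:ℝ)) * ((b:ℝ)^c / (n:ℝ) ^ ((j:ℝ) - 1/2)) := by
            rw [hsplit]
            apply mul_le_mul hfc _ (by positivity) (by positivity)
            exact div_le_div_of_nonneg_left (by positivity) (by positivity) hkey
        _ = W := by
            rw [Real.rpow_sub hnpos]
            have h1 : (n:ℝ) ^ ((1:ℝ)/2) ≠ 0 := by positivity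
            have h2 : (n:ℝ) ^ ((j:ℝ)) ≠ 0 := by positivity
            field_simp
            ring
  have hzero : (∑ p ∈ (TT n t s).filter (fun p => p.1.card = 0),
      (b:ℝ) ^ (c - mm s p.1.card)) = 0 := by
    have : (TT n t s).filter (fun p => p.1.card = 0) = ∅ := by
      rw [Finset.eq_empty_iff_forall_notMem]
      intro p hp
      simp only [TT, Finset.mem_filter] at hp
      exact absurd hp.2 (by simpa using hp.1.2.1.card_pos.ne')
    rw [this, Finset.sum_empty]
  rw [Finset.sum_range_succ']
  have hsum : (∑ j ∈ Finset.range t, ∑ p ∈ (TT n t s).filter (fun p => p.1.card = j + 1),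
      (b:ℝ) ^ (c - mm s p.1.card)) ≤ t * W := by
    calc _ ≤ ∑ _j ∈ Finset.range t, W :=
          Finset.sum_le_sum (fun j hj => hterm (j+1) (Nat.succ_le_succ (Nat.zero_le j))
            (Nat.succ_le_of_lt (Finset.mem_range.1 hj)))
      _ = t * W := by rw [Finset.sum_const, Finset.card_range, nsmul_eq_mul]
  rw [hzero, add_zero]
  calc _ ≤ (t:ℝ) * W := hsum
    _ = (t : ℝ) * 2 ^ (t*t) * (n:ℝ) ^ ((1:ℝ)/2) * (b:ℝ) ^ c := by rw [hW]; ring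
lemma card_induce_le (n : ℕ) (S : Finset (Sym2 (Fin n))) (R : Finset (Fin n)) :
    Nat.card ((SimpleGraph.fromEdgeSet (↑S : Set (Sym2 (Fin n)))).induce
        (↑R : Set (Fin n))).edgeSet
      ≤ (S.filter (fun e => ∀ v ∈ e, v ∈ R)).card := by
  classical
  set G := (SimpleGraph.fromEdgeSet (↑S : Set (Sym2 (Fin n)))).induce (↑R : Set (Fin n))
  set F := S.filter (fun e => ∀ v ∈ e, v ∈ R) with hF
  have hmem : ∀ e : Sym2 (↑R : Set (Fin n)), e ∈ G.edgeSet →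
      Sym2.map (Subtype.val) e ∈ F := by
    intro e
    induction e using Sym2.inductionOn with
    | hf a b =>
      intro he
      rw [SimpleGraph.mem_edgeSet] at he
      have hadj : (SimpleGraph.fromEdgeSet (↑S : Set (Sym2 (Fin n)))).Adj ↑a ↑b := he
      rw [SimpleGraph.fromEdgeSet_adj] at hadj
      rw [Sym2.map_pair_eq, hF, Finset.mem_filter]
      refine ⟨by exact_mod_cast hadj.1, ?_⟩
      intro v hv
      rcases Sym2.mem_iff.1 hv with rfl | rfl
      · exact a.2
      · exact b.2
  have hinj : Function.Injective (fun x : G.edgeSet => (⟨Sym2.map Subtype.val x.1,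
      hmem x.1 x.2⟩ : (↑F : Set (Sym2 (Fin n))))) := by
    intro x y hxy
    apply Subtype.ext
    apply Sym2.map.injective Subtype.val_injective
    simpa [Subtype.ext_iff] using hxy
  have := Nat.card_le_card_of_injective _ hinj
  calc Nat.card G.edgeSet ≤ Nat.card (↑F : Set (Sym2 (Fin n))) := this
    _ = F.card := by rw [Nat.card_coe_set_eq, Set.ncard_coe_finset]

lemma card_fromEdgeSet (n : ℕ) (S : Finset (Sym2 (Fin n)))
    (hS : ∀ e ∈ S, ¬ e.IsDiag) :
    Nat.card (SimpleGraph.fromEdgeSet (↑S : Set (Sym2 (Fin n)))).edgeSet = S.card := by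
  rw [SimpleGraph.edgeSet_fromEdgeSet]
  have : (↑S : Set (Sym2 (Fin n))) \ {e | e.IsDiag} = ↑S := by
    ext e
    simp only [Set.mem_diff, Set.mem_setOf_eq, Finset.mem_coe, and_iff_left_iff_imp]
    exact fun he => hS e he
  rw [Sym2.diagSet_eq_setOfPred_isDiag, this, Nat.card_coe_set_eq, Set.ncard_coe_finset]


end Stmt7Aux

set_option maxHeartbeats 2000000

/-- Lower bound: for every `s > 2` and `t`, there is `ε > 0` such that for large `n` some
`n`-vertex graph with average degree at least `n^{1-2/s+ε}` has no nonempty subgraph on at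
most `t` vertices with average degree at least `s`. -/
theorem stmt_7 (s : ℝ) (hs : 2 < s) (t : ℕ) (ht : 0 < t) :
    ∃ ε : ℝ, 0 < ε ∧ ∃ N : ℕ, ∀ n : ℕ, N ≤ n →
      ∃ G : SimpleGraph (Fin n),
        (n : ℝ) ^ (1 - 2 / s + ε) * (n : ℝ) ≤ 2 * (Nat.card G.edgeSet : ℝ) ∧
        ∀ R : Finset (Fin n), R.Nonempty → R.card ≤ t →
          2 * (Nat.card (G.induce (↑R : Set (Fin n))).edgeSet : ℝ) < s * (R.card : ℝ) := by
  classical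
  open Stmt7Aux in
  have hs0 : (0:ℝ) < s := by linarith
  have ht0 : (0:ℝ) < (t:ℝ) := by exact_mod_cast ht
  have ht1 : (1:ℝ) ≤ (t:ℝ) := by exact_mod_cast ht
  set ε : ℝ := 1/(2*s*t) with hεdef
  set β : ℝ := 2/s - 1/(s*t) with hβdef
  have hε : 0 < ε := by rw [hεdef]; positivity
  have hβ0 : 0 < β := by
    have h : β = (2*t - 1)/(s*t) := by rw [hβdef]; field_simp
    rw [h]
    apply div_pos (by linarith) (by positivity)
  have hβlt : β < 1 := by
    rw [hβdef]
    have : 2/s < 1 := by rw [div_lt_one hs0]; linarith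
    have : 0 < 1/(s*t) := by positivity
    linarith
  have hβε : β + 2*ε = 2/s := by rw [hβdef, hεdef]; field_simp; ring
  clear_value β ε
  -- eventual bounds
  have hev : ∀ᶠ n : ℕ in Filter.atTop,
      2 ≤ n ∧ 8 ≤ (n:ℝ)^ε ∧ 16*((t:ℝ) * 2^(t*t)) ≤ (n:ℝ)^((3:ℝ)/2 - β) := by
    have t1 : Filter.Tendsto (fun n : ℕ => (n:ℝ)^ε) Filter.atTop Filter.atTop :=
      (tendsto_rpow_atTop (y := ε) hε).comp tendsto_natCast_atTop_atTop
    have t2 : Filter.Tendsto (fun n : ℕ => (n:ℝ)^((3:ℝ)/2 - β)) Filter.atTop Filter.atTop :=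
      (tendsto_rpow_atTop (y := (3:ℝ)/2 - β) (by linarith)).comp tendsto_natCast_atTop_atTop
    filter_upwards [Filter.eventually_ge_atTop 2, t1.eventually_ge_atTop 8,
      t2.eventually_ge_atTop (16*((t:ℝ) * 2^(t*t)))] with n h1 h2 h3
    exact ⟨h1, h2, h3⟩
  obtain ⟨N, hN⟩ := Filter.eventually_atTop.1 hev
  refine ⟨ε, hε, N, fun n hn => ?_⟩
  obtain ⟨hn2, hn8, hn16⟩ := hN n hn
  have hn0 : 0 < n := by omega
  have hn1 : (1:ℝ) ≤ (n:ℝ) := by exact_mod_cast Nat.one_le_of_lt hn2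
  have hnpos : (0:ℝ) < (n:ℝ) := by linarith
  -- the probability space
  set b : ℕ := ⌈(n:ℝ)^β⌉₊ with hbdef
  have hb : 0 < b := Nat.ceil_pos.2 (Real.rpow_pos_of_pos hnpos β)
  have hb0 : (0:ℝ) < (b:ℝ) := by exact_mod_cast hb
  have hbn : (n:ℝ)^β ≤ (b:ℝ) := Nat.le_ceil _
  have hnβ1 : (1:ℝ) ≤ (n:ℝ)^β := Real.one_le_rpow hn1 hβ0.le
  have hble : (b:ℝ) ≤ 2*(n:ℝ)^β := by
    have := Nat.ceil_lt_add_one (a := (n:ℝ)^β) (by positivity)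
    rw [← hbdef] at this
    linarith
  set c := Fintype.card (Sym2 (Fin n)) with hcdef
  have hc1 : 1 ≤ c := by
    rw [hcdef]
    have : Nonempty (Sym2 (Fin n)) := ⟨s(⟨0, hn0⟩, ⟨0, hn0⟩)⟩
    exact Fintype.card_pos
  set M := (KK n).card with hMdef
  -- the exponent hypothesis for the sum bound
  have hβm : ∀ r : ℕ, 1 ≤ r → r ≤ t → (r:ℝ) - 1/2 ≤ β * (mm s r) := by
    intro r hr1 hrt
    have hr1' : (1:ℝ) ≤ (r:ℝ) := by exact_mod_cast hr1
    have hrt' : (r:ℝ) ≤ (t:ℝ) := by exact_mod_cast hrt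
    have h1 : s * r / 2 ≤ (mm s r : ℝ) := Nat.le_ceil _
    have h2 : β * (s * r / 2) ≤ β * (mm s r) := by
      apply mul_le_mul_of_nonneg_left h1 hβ0.le
    have h3 : β * (s * r / 2) = (r:ℝ) - r/(2*t) := by
      rw [hβdef]; field_simp
    have h4 : (r:ℝ)/(2*t) ≤ 1/2 := by
      rw [div_le_div_iff₀ (by positivity) (by norm_num)]
      nlinarith
    linarith
  -- averaging: there is a good ω
  have hΩne : Nonempty (Om n b) := ⟨fun _ => ⟨0, hb⟩⟩
  set D : ℝ := (t : ℝ) * 2 ^ (t*t) * (n:ℝ) ^ ((1:ℝ)/2) with hDdef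
  set L : ℝ := (M:ℝ)/(b:ℝ) - D with hLdef
  have hmain : ∃ ω : Om n b, L ≤ ((present n b ω).card : ℝ) - ((Bad n b t s ω).card : ℝ) := by
    have hsum : (Fintype.card (Om n b) : ℝ) * L
        ≤ ∑ ω : Om n b, (((present n b ω).card : ℝ) - ((Bad n b t s ω).card : ℝ)) := by
      have hcard : (Fintype.card (Om n b) : ℝ) = (b:ℝ)^c := by
        rw [Fintype.card_fun]; push_cast; rw [hcdef]; norm_num
      rw [Finset.sum_sub_distrib]
      have hX : (∑ ω : Om n b, ((present n b ω).card : ℝ)) = (b:ℝ)^c * ((M:ℝ)/(b:ℝ)) := by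
        have := sum_X n b hb
        have hcast : (∑ ω : Om n b, ((present n b ω).card : ℝ))
            = ((M * b ^ (c - 1) : ℕ) : ℝ) := by
          rw [← this]; push_cast; rfl
        rw [hcast]
        push_cast
        rw [pow_sub₀ _ (ne_of_gt hb0) hc1]
        field_simp
      have hY : (∑ ω : Om n b, ((Bad n b t s ω).card : ℝ)) ≤ D * (b:ℝ)^c := by
        have h1 := sum_Y n b t s hb
        have hcast : (∑ ω : Om n b, ((Bad n b t s ω).card : ℝ))
            = ∑ p ∈ TT n t s, ((b:ℝ) ^ (c - mm s p.1.card)) := by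
          rw [← Nat.cast_sum, h1]; push_cast; rfl
        rw [hcast]
        have := sum_T_real_bound n b t s β hb hn0 hbn hβm
        rw [hDdef]
        linarith
      rw [hX]
      rw [hcard, hLdef]
      have : (b:ℝ)^c * ((M:ℝ)/(b:ℝ) - D) = (b:ℝ)^c * ((M:ℝ)/(b:ℝ)) - D * (b:ℝ)^c := by ring
      rw [this]
      linarith
    by_contra hcon
    push_neg at hcon
    have : ∑ ω : Om n b, (((present n b ω).card : ℝ) - ((Bad n b t s ω).card : ℝ))
        < ∑ _ω : Om n b, L := by
      apply Finset.sum_lt_sum_of_nonempty Finset.univ_nonempty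
      intro ω _
      exact hcon ω
    rw [Finset.sum_const, Finset.card_univ, nsmul_eq_mul] at this
    linarith
  obtain ⟨ω, hω⟩ := hmain
  -- deletion
  set junk : Sym2 (Fin n) := s(⟨0, hn0⟩, ⟨0, hn0⟩) with hjunk
  set del : Finset (Fin n) × Finset (Sym2 (Fin n)) → Sym2 (Fin n) :=
    fun p => if h : p.2.Nonempty then h.choose else junk with hdel
  set Deleted : Finset (Sym2 (Fin n)) := (Bad n b t s ω).image del with hDel
  set S : Finset (Sym2 (Fin n)) := present n b ω \ Deleted with hSdef
  have hSpres : S ⊆ present n b ω := Finset.sdiff_subset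
  have hSKK : S ⊆ KK n := hSpres.trans (Finset.filter_subset _ _)
  -- edge count of S
  have hScard : ((present n b ω).card : ℝ) - ((Bad n b t s ω).card : ℝ) ≤ (S.card : ℝ) := by
    have h1 : present n b ω ⊆ S ∪ Deleted := by
      intro e he
      by_cases hd : e ∈ Deleted
      · exact Finset.mem_union_right _ hd
      · exact Finset.mem_union_left _ (Finset.mem_sdiff.2 ⟨he, hd⟩)
    have h2 : (present n b ω).card ≤ S.card + Deleted.card :=
      (Finset.card_le_card h1).trans (Finset.card_union_le _ _)
    have h3 : Deleted.card ≤ (Bad n b t s ω).card := Finset.card_image_le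
    have h4 := h2.trans (Nat.add_le_add_left h3 _)
    have h5 : ((present n b ω).card : ℝ) ≤ (S.card : ℝ) + ((Bad n b t s ω).card : ℝ) := by
      exact_mod_cast h4
    linarith
  set G : SimpleGraph (Fin n) := SimpleGraph.fromEdgeSet (↑S : Set (Sym2 (Fin n))) with hG
  refine ⟨G, ?_, ?_⟩
  · -- edge count lower bound
    have hGcard : Nat.card G.edgeSet = S.card := by
      rw [hG]
      apply card_fromEdgeSet
      intro e he
      have := hSKK he
      simp only [KK, Finset.mem_filter] at this
      exact this.2
    rw [hGcard]
    clear hdel hDel hSdef hjunk hβm hN hev hΩne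
    clear_value S Deleted del junk
    clear hSpres hSKK
    clear_value b M D L
    -- numeric chain
    have hM : ((n:ℝ)*(n:ℝ))/4 ≤ (M:ℝ) := by
      rw [hMdef, KK_card, Nat.cast_choose_two]
      have h2 : (2:ℝ) ≤ (n:ℝ) := by exact_mod_cast hn2
      nlinarith
    have hMb : (n:ℝ)^((2:ℝ)-β)/8 ≤ (M:ℝ)/(b:ℝ) := by
      have h1 : (M:ℝ)/(2*(n:ℝ)^β) ≤ (M:ℝ)/(b:ℝ) := by
        apply div_le_div_of_nonneg_left _ hb0 hble
        positivity
      have h2 : (n:ℝ)^((2:ℝ)-β)/8 ≤ (M:ℝ)/(2*(n:ℝ)^β) := by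
        have e1 : (n:ℝ)^β * (n:ℝ)^((2:ℝ)-β) = (n:ℝ)*(n:ℝ) := by
          rw [← Real.rpow_add hnpos, show (β + ((2:ℝ)-β)) = ((2:ℕ):ℝ) by push_cast; ring,
            Real.rpow_natCast]
          ring
        rw [div_le_div_iff₀ (by norm_num) (by positivity)]
        calc (n:ℝ)^((2:ℝ)-β) * (2*(n:ℝ)^β) = 2*((n:ℝ)*(n:ℝ)) := by rw [← e1]; ring
          _ ≤ (M:ℝ) * 8 := by linarith
      linarith
    have hexp : (2:ℝ) - β = (2 - 2/s + ε) + ε := by rw [← hβε]; ring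
    have hkey1 : 8 * (n:ℝ)^(2 - 2/s + ε) ≤ (n:ℝ)^((2:ℝ)-β) := by
      have hsplit : (n:ℝ)^((2:ℝ)-β) = (n:ℝ)^(2 - 2/s + ε) * (n:ℝ)^ε := by
        rw [hexp]; exact Real.rpow_add hnpos _ _
      rw [hsplit]
      have h1 : (0:ℝ) ≤ (n:ℝ)^(2 - 2/s + ε) := by positivity
      nlinarith [mul_le_mul_of_nonneg_left hn8 h1]
    have hkey2 : 16 * D ≤ (n:ℝ)^((2:ℝ)-β) := by
      have hsplit : (n:ℝ)^((2:ℝ)-β) = (n:ℝ)^((1:ℝ)/2) * (n:ℝ)^((3:ℝ)/2-β) := by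
        rw [show ((2:ℝ) - β) = (1:ℝ)/2 + ((3:ℝ)/2 - β) by ring]
        exact Real.rpow_add hnpos _ _
      rw [hsplit]
      have h1 : (0:ℝ) ≤ (n:ℝ)^((1:ℝ)/2) := by positivity
      rw [hDdef]
      nlinarith [mul_le_mul_of_nonneg_left hn16 h1]
    have hchain : (n:ℝ)^(2 - 2/s + ε) ≤ 2 * (S.card : ℝ) := by
      have h1 : L ≤ (S.card : ℝ) := le_trans hω hScard
      have h2 : (n:ℝ)^((2:ℝ)-β)/8 - D ≤ L := by rw [hLdef]; linarith
      linarith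
    calc (n:ℝ)^(1 - 2/s + ε) * (n:ℝ)
        = (n:ℝ)^(2 - 2/s + ε) := by
          rw [show (2 - 2/s + ε) = (1 - 2/s + ε) + 1 by ring,
            Real.rpow_add_one (ne_of_gt hnpos)]
      _ ≤ 2 * (S.card : ℝ) := hchain
  · -- subgraph property
    clear hω hScard hβm hN hev hΩne
    clear_value b c M D L S Deleted del junk G
    intro R hRne hRt
    have hr1 : 1 ≤ R.card := hRne.card_pos
    have hmm1 : 1 ≤ mm s R.card := by
      apply Nat.one_le_iff_ne_zero.2
      apply Nat.pos_iff_ne_zero.1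
      apply Nat.ceil_pos.2
      have : (0:ℝ) < (R.card : ℝ) := by exact_mod_cast hr1
      positivity
    have hfilter : (S.filter (fun e => ∀ v ∈ e, v ∈ R)).card < mm s R.card := by
      by_contra hge
      push_neg at hge
      obtain ⟨F, hFsub, hFcard⟩ := Finset.exists_subset_card_eq hge
      have hFS : F ⊆ S := hFsub.trans (Finset.filter_subset _ _)
      have hFin : ∀ e ∈ F, ∀ v ∈ e, v ∈ R := by
        intro e he
        exact (Finset.mem_filter.1 (hFsub he)).2
      have hT : (R, F) ∈ TT n t s := by
        simp only [TT, Finset.mem_filter, Finset.mem_product, Finset.mem_powerset]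
        exact ⟨⟨Finset.subset_univ _, hFS.trans hSKK⟩, hRne, hRt, hFcard, hFin⟩
      have hBad : (R, F) ∈ Bad n b t s ω := by
        simp only [Bad, Finset.mem_filter]
        refine ⟨hT, fun e he => ?_⟩
        have := hSpres (hFS he)
        exact (Finset.mem_filter.1 this).2
      have hFne : F.Nonempty := Finset.card_pos.1 (by omega)
      have hdelF : del (R, F) ∈ F := by
        rw [hdel]
        simp only
        rw [dif_pos hFne]
        exact hFne.choose_spec
      have hdelD : del (R, F) ∈ Deleted := by
        rw [hDel]
        exact Finset.mem_image_of_mem del hBad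
      have := hFS hdelF
      rw [hSdef, Finset.mem_sdiff] at this
      exact this.2 hdelD
    have hle := Stmt7Aux.card_induce_le n S R
    rw [← hG] at hle
    have hlt : Nat.card (G.induce (↑R : Set (Fin n))).edgeSet < mm s R.card :=
      lt_of_le_of_lt hle hfilter
    have h1 : (Nat.card (G.induce (↑R : Set (Fin n))).edgeSet : ℝ) + 1 ≤ (mm s R.card : ℝ) := by
      exact_mod_cast hlt
    have h2 : (mm s R.card : ℝ) < s * R.card / 2 + 1 := by
      apply Nat.ceil_lt_add_one
      have : (0:ℝ) ≤ (R.card:ℝ) := by positivity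
      positivity
    linarith
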